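/- Let C be an F_q-linear subspace of F_q^m × F_q^n × F_q^m and let Ĉ be its twisted dual constraint code. Fix an enumeration α₁,…,α_q of the elements of F_q. Then for every y ∈ ℂ and all complex numbers x_{i,j}, z_{i,j} (1 ≤ i ≤ m, 1 ≤ j ≤ q): |C| · Σ_{(w,p,w') ∈ Ĉ} (∏_{i=1}^m x_{i,j(wᵢ)}) · y^{wt(p)} · (∏_{i=1}^m z_{i,j(w'ᵢ)}) = Σ_{(u₁,u₂,u₃) ∈ C} (∏_{i=1}^m Σ_{j=1}^q ω^{−tr(u_{1,i}·α_j)} x_{i,j}) · (1+(q−1)y)^{n−wt(u₂)} (1−y)^{wt(u₂)} · (∏_{i=1}^m Σ_{j=1}^q ω^{+tr(u_{3,i}·α_j)} z_{i,j}), where j(β) denotes the index with α_{j(β)} = β. (This is the MacWilliams identity for the complete-memory weight enumerators of a constraint code and the constraint code of the dual convolutional code.) -/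

import Mathlib

/-!
STATEMENT 16: The MacWilliams identity for the complete-memory weight
enumerators of a constraint code `C ⊆ F_q^m × F_q^n × F_q^m` and the
constraint code `Ĉ` of its dual convolutional code: with an enumeration
`α₁,…,α_q` of `F_q` (here an equiv `e : Fin q ≃ F_q`, `α_j = e j`),
`|C| · Σ_{(w,p,w') ∈ Ĉ} (∏ᵢ x_{i,j(wᵢ)}) y^{wt(p)} (∏ᵢ z_{i,j(w'ᵢ)})
 = Σ_{(u₁,u₂,u₃) ∈ C} (∏ᵢ Σⱼ ω^{−tr(u_{1,i}αⱼ)} x_{i,j})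
   (1+(q−1)y)^{n−wt(u₂)} (1−y)^{wt(u₂)} (∏ᵢ Σⱼ ω^{+tr(u_{3,i}αⱼ)} z_{i,j})`.
-/

open scoped Classical
set_option linter.unusedSectionVars false

noncomputable section

variable (p : ℕ) [Fact p.Prime] (F : Type) [Field F] [Fintype F] [Algebra (ZMod p) F]

/-- Hamming weight of a vector. -/
def wt {n : ℕ} (v : Fin n → F) : ℕ := (Finset.univ.filter fun i => v i ≠ 0).card

/-- The twisted dual constraint code. -/
def twistedDual {m n : ℕ} (C : Set ((Fin m → F) × (Fin n → F) × (Fin m → F))) :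
    Set ((Fin m → F) × (Fin n → F) × (Fin m → F)) :=
  {v | ∀ c ∈ C, (∑ i, v.1 i * c.1 i) + (∑ i, v.2.1 i * c.2.1 i)
      - (∑ i, v.2.2 i * c.2.2 i) = 0}

/-- `ω = exp(2πi/p)`. -/
def omg : ℂ := Complex.exp (2 * Real.pi * Complex.I / p)

lemma omg_ne_zero : omg p ≠ 0 := Complex.exp_ne_zero _

lemma omg_pow_p : omg p ^ p = 1 := by
  have hp : (p : ℂ) ≠ 0 := Nat.cast_ne_zero.mpr (Fact.out : p.Prime).ne_zero
  rw [omg, ← Complex.exp_nat_mul,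
    show (p : ℂ) * (2 * Real.pi * Complex.I / p) = 2 * Real.pi * Complex.I by field_simp,
    Complex.exp_two_pi_mul_I]

lemma omg_zpow_emod (a : ℤ) : omg p ^ a = omg p ^ (a % p) := by
  conv_lhs => rw [← Int.emod_add_mul_ediv a p]
  rw [zpow_add₀ (omg_ne_zero p), zpow_mul, zpow_natCast, omg_pow_p, one_zpow, mul_one]

def chi (a : F) : ℂ := omg p ^ (((Algebra.trace (ZMod p) F a).val : ℤ))

lemma chi_zero : chi p F 0 = 1 := by
  simp [chi]

lemma chi_add (a b : F) : chi p F (a + b) = chi p F a * chi p F b := by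
  unfold chi
  rw [map_add, ← zpow_add₀ (omg_ne_zero p), omg_zpow_emod,
    omg_zpow_emod p (((Algebra.trace (ZMod p) F a).val : ℤ) + ((Algebra.trace (ZMod p) F b).val : ℤ))]
  congr 1
  rw [ZMod.val_add]
  push_cast
  rw [Int.emod_emod_of_dvd _ dvd_rfl]

lemma chi_sum {ι : Type*} (s : Finset ι) (f : ι → F) :
    chi p F (∑ i ∈ s, f i) = ∏ i ∈ s, chi p F (f i) := by
  induction s using Finset.induction with
  | empty => simp [chi_zero]
  | insert _ _ h ih => rw [Finset.sum_insert h, Finset.prod_insert h, chi_add, ih]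

lemma chi_neg (a : F) :
    chi p F (-a) = omg p ^ (-(((Algebra.trace (ZMod p) F a).val : ℤ))) := by
  have h : chi p F (-a) * chi p F a = 1 := by
    rw [← chi_add]; simp [chi_zero]
  rw [zpow_neg]
  exact eq_inv_of_mul_eq_one_left h

lemma chi_ne_one (a : F) (h : Algebra.trace (ZMod p) F a ≠ 0) : chi p F a ≠ 1 := by
  intro hone
  have hv0 : (Algebra.trace (ZMod p) F a).val ≠ 0 :=
    fun h0 => h (by rwa [← ZMod.val_eq_zero])
  have hvlt : (Algebra.trace (ZMod p) F a).val < p := ZMod.val_lt _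
  set v := (Algebra.trace (ZMod p) F a).val with hv
  have hpC : (p : ℂ) ≠ 0 := Nat.cast_ne_zero.mpr (Fact.out : p.Prime).ne_zero
  have he : Complex.exp ((v : ℂ) * (2 * Real.pi * Complex.I / p)) = 1 := by
    rw [Complex.exp_nat_mul]
    rw [chi, omg] at hone
    rwa [zpow_natCast] at hone
  rw [Complex.exp_eq_one_iff] at he
  obtain ⟨k, hk⟩ := he
  have h2 : (2 * Real.pi * Complex.I : ℂ) ≠ 0 := by
    simp [Real.pi_ne_zero, Complex.I_ne_zero]
  have : (v : ℂ) = k * p := by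
    field_simp at hk
    have hk2 : (v : ℂ) * (2 * Real.pi * Complex.I) = ((k : ℂ) * p) * (2 * Real.pi * Complex.I) := by
      linear_combination (2 * Real.pi * Complex.I) * hk
    exact mul_right_cancel₀ h2 hk2
  have hZ : (v : ℤ) = k * p := by exact_mod_cast this
  have hdvd : (p : ℤ) ∣ (v : ℤ) := ⟨k, by linarith [hZ]⟩
  have : p ∣ v := Int.ofNat_dvd.mp hdvd
  have := Nat.le_of_dvd (Nat.pos_of_ne_zero hv0) this
  omega

lemma exists_trace_ne_zero : ∃ a : F, Algebra.trace (ZMod p) F a ≠ 0 := by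
  have h := Algebra.trace_ne_zero (ZMod p) F
  simpa [funext_iff, LinearMap.ext_iff] using h

lemma sum_shift_eq_zero {α : Type*} [Fintype α] (f : α → ℂ) (σ : Equiv.Perm α) (c : ℂ)
    (hc : c ≠ 1) (h : ∀ a, f (σ a) = c * f a) : ∑ a, f a = 0 := by
  have h1 : ∑ a, f a = c * ∑ a, f a := by
    rw [Finset.mul_sum]
    calc ∑ a, f a = ∑ a, f (σ a) := (Equiv.sum_comp σ f).symm
      _ = ∑ a, c * f a := by simp [h]
  have h2 : (1 - c) * ∑ a, f a = 0 := by linear_combination h1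
  rcases mul_eq_zero.mp h2 with h3 | h3
  · exact absurd (by linear_combination -h3) hc
  · exact h3

lemma sum_chi_mul (c : F) (hc : c ≠ 0) : ∑ β : F, chi p F (c * β) = 0 := by
  obtain ⟨a, ha⟩ := exists_trace_ne_zero p F
  refine sum_shift_eq_zero _ (Equiv.addRight (c⁻¹ * a)) (chi p F a) (chi_ne_one p F a ha) ?_
  intro β
  have h1 : c * (β + c⁻¹ * a) = c * β + a := by field_simp
  simp only [Equiv.coe_addRight, h1, chi_add]
  ring

def Bf {m n : ℕ} (v u : (Fin m → F) × (Fin n → F) × (Fin m → F)) : F :=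
  (∑ i, v.1 i * u.1 i) + (∑ i, v.2.1 i * u.2.1 i) - (∑ i, v.2.2 i * u.2.2 i)

lemma mem_twistedDual_iff {m n : ℕ} (C : Set ((Fin m → F) × (Fin n → F) × (Fin m → F)))
    (v : (Fin m → F) × (Fin n → F) × (Fin m → F)) :
    v ∈ twistedDual F C ↔ ∀ c ∈ C, Bf F v c = 0 := Iff.rfl

lemma Bf_add_right {m n : ℕ} (v u u' : (Fin m → F) × (Fin n → F) × (Fin m → F)) :
    Bf F v (u + u') = Bf F v u + Bf F v u' := by
  simp only [Bf, Prod.fst_add, Prod.snd_add, Pi.add_apply, mul_add,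
    Finset.sum_add_distrib]
  ring

lemma Bf_smul_right {m n : ℕ} (t : F) (v u : (Fin m → F) × (Fin n → F) × (Fin m → F)) :
    Bf F v (t • u) = t * Bf F v u := by
  simp only [Bf, Prod.smul_fst, Prod.smul_snd, Pi.smul_apply, smul_eq_mul,
    mul_sub, mul_add, Finset.mul_sum]
  congr 2 <;> first
    | exact Finset.sum_congr rfl fun i _ => by ring
    | (funext i; ring)

lemma orth {m n : ℕ} (C : Submodule F ((Fin m → F) × (Fin n → F) × (Fin m → F)))
    (v : (Fin m → F) × (Fin n → F) × (Fin m → F)) :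
    ∑ u : (Fin m → F) × (Fin n → F) × (Fin m → F),
      (if u ∈ C then chi p F (-(Bf F v u)) else 0)
    = (Nat.card C : ℂ) *
        (if v ∈ twistedDual F (C : Set ((Fin m → F) × (Fin n → F) × (Fin m → F))) then 1 else 0) := by
  by_cases hv : v ∈ twistedDual F (C : Set ((Fin m → F) × (Fin n → F) × (Fin m → F)))
  · rw [if_pos hv, mul_one]
    rw [Finset.sum_congr rfl (fun u _ => show (if u ∈ C then chi p F (-(Bf F v u)) else 0)
        = if u ∈ C then 1 else 0 by
      by_cases hu : u ∈ C
      · rw [if_pos hu, if_pos hu, (mem_twistedDual_iff F _ v).mp hv u hu, neg_zero, chi_zero]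
      · rw [if_neg hu, if_neg hu])]
    rw [Finset.sum_boole, Nat.card_eq_fintype_card, Fintype.card_subtype]
  · rw [if_neg hv, mul_zero]
    have hex : ∃ c ∈ C, Bf F v c ≠ 0 := by
      by_contra hcon
      push_neg at hcon
      exact hv fun c hc => hcon c hc
    obtain ⟨c, hcC, hBc⟩ := hex
    obtain ⟨a, ha⟩ := exists_trace_ne_zero p F
    set c' := ((-a) / Bf F v c) • c with hc'def
    have hc'C : c' ∈ C := C.smul_mem _ hcC
    have hBc' : Bf F v c' = -a := by
      rw [hc'def, Bf_smul_right]
      field_simp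
    refine sum_shift_eq_zero _ (Equiv.addRight c') (chi p F a) (chi_ne_one p F a ha) ?_
    intro u
    show (if u + c' ∈ C then chi p F (-(Bf F v (u + c'))) else 0) = chi p F a * (if u ∈ C then chi p F (-(Bf F v u)) else 0)
    by_cases hu : u ∈ C
    · rw [if_pos (C.add_mem hu hc'C), if_pos hu, Bf_add_right, hBc', neg_add, neg_neg,
        chi_add, mul_comm]
    · rw [if_neg (fun hmem => hu (by simpa using C.sub_mem hmem hc'C)), if_neg hu, mul_zero]

lemma expandProd {m : ℕ} (c : Fin m → F) (e : Fin (Fintype.card F) ≃ F)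
    (t : Fin m → Fin (Fintype.card F) → ℂ) :
    ∏ i, ∑ j, chi p F (c i * e j) * t i j
      = ∑ w : Fin m → F, (∏ i, chi p F (c i * w i)) * ∏ i, t i (e.symm (w i)) := by
  rw [Finset.prod_univ_sum]
  rw [← Fintype.piFinset_univ]
  refine Fintype.sum_equiv (Equiv.piCongrRight fun _ : Fin m => e) _ _ fun d => ?_
  simp only [Equiv.piCongrRight_apply, Pi.map_apply, Equiv.symm_apply_apply]
  rw [← Finset.prod_mul_distrib]

lemma sum_ite_y (y : ℂ) :
    ∑ β : F, (if β ≠ 0 then y else 1) = 1 + ((Fintype.card F : ℂ) - 1) * y := by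
  rw [Finset.sum_ite, Finset.sum_const, Finset.sum_const]
  have h1 : (Finset.univ.filter fun β : F => β ≠ 0).card = Fintype.card F - 1 := by
    rw [Finset.filter_ne', Finset.card_erase_of_mem (Finset.mem_univ _), Finset.card_univ]
  have hq : 0 < Fintype.card F := Fintype.card_pos
  have h3 := Finset.card_filter_add_card_filter_not
    (s := (Finset.univ : Finset F)) (p := fun β : F => β ≠ 0)
  rw [Finset.card_univ] at h3
  have h2 : (Finset.univ.filter fun β : F => ¬β ≠ 0).card = 1 := by omega
  rw [h1, h2, nsmul_eq_mul, nsmul_eq_mul, Nat.cast_sub Fintype.card_pos, Nat.cast_one]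
  ring

lemma factor_eval (y : ℂ) (c : F) :
    ∑ β : F, chi p F ((-c) * β) * (if β ≠ 0 then y else 1)
      = if c = 0 then 1 + ((Fintype.card F : ℂ) - 1) * y else 1 - y := by
  by_cases hc : c = 0
  · rw [if_pos hc, hc]
    simp only [neg_zero, zero_mul, chi_zero, one_mul]
    exact sum_ite_y F y
  · rw [if_neg hc]
    have hsum : ∑ β : F, chi p F ((-c) * β) = 0 := sum_chi_mul p F (-c) (neg_ne_zero.mpr hc)
    rw [← Finset.add_sum_erase _ _ (Finset.mem_univ (0 : F))]
    have h0 : chi p F ((-c) * 0) * (if (0 : F) ≠ 0 then y else 1) = 1 := by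
      simp [chi_zero]
    rw [h0]
    have hrest : ∑ β ∈ Finset.univ.erase (0 : F), chi p F ((-c) * β) * (if β ≠ 0 then y else 1)
        = y * ∑ β ∈ Finset.univ.erase (0 : F), chi p F ((-c) * β) := by
      rw [Finset.mul_sum]
      refine Finset.sum_congr rfl fun β hβ => ?_
      rw [if_pos (Finset.mem_erase.mp hβ).1]
      ring
    rw [hrest, Finset.sum_erase_eq_sub (Finset.mem_univ _), hsum]
    simp [chi_zero]
    ring

lemma expandMid {n : ℕ} (u2 : Fin n → F) (y : ℂ) :
    (1 + ((Fintype.card F : ℂ) - 1) * y) ^ (n - wt F u2) * (1 - y) ^ wt F u2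
      = ∑ pv : Fin n → F, (∏ i, chi p F ((-u2 i) * pv i)) * y ^ wt F pv := by
  have hterm : ∀ pv : Fin n → F, (∏ i, chi p F ((-u2 i) * pv i)) * y ^ wt F pv
      = ∏ i, chi p F ((-u2 i) * pv i) * (if pv i ≠ 0 then y else 1) := by
    intro pv
    rw [Finset.prod_mul_distrib]
    congr 1
    rw [wt, Finset.prod_ite, Finset.prod_const, Finset.prod_const, one_pow, mul_one]
  rw [Finset.sum_congr rfl fun pv _ => hterm pv]
  rw [← Fintype.piFinset_univ,
    ← Finset.prod_univ_sum (fun _ : Fin n => (Finset.univ : Finset F))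
      (fun i β => chi p F ((-u2 i) * β) * if β ≠ 0 then y else 1)]
  rw [Finset.prod_congr rfl fun i _ => factor_eval p F y (u2 i)]
  rw [Finset.prod_ite, Finset.prod_const, Finset.prod_const]
  congr 2
  have h3 := Finset.card_filter_add_card_filter_not
    (s := (Finset.univ : Finset (Fin n))) (p := fun i => u2 i = 0)
  rw [Finset.card_univ, Fintype.card_fin] at h3
  have h4 : (Finset.univ.filter fun i => ¬u2 i = 0).card = wt F u2 := rfl
  rw [wt] at h4
  rw [wt]
  omega

lemma chi_neg_Bf {m n : ℕ} (v u : (Fin m → F) × (Fin n → F) × (Fin m → F)) :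
    chi p F (-(Bf F v u))
      = (∏ i, chi p F ((-u.1 i) * v.1 i)) * (∏ i, chi p F ((-u.2.1 i) * v.2.1 i)) *
          ∏ i, chi p F (u.2.2 i * v.2.2 i) := by
  rw [← chi_sum, ← chi_sum, ← chi_sum, ← chi_add, ← chi_add]
  congr 1
  have h1 : ∀ (k : ℕ) (a b : Fin k → F), -(∑ i, a i * b i) = ∑ i, (-b i) * a i := by
    intro k a b
    have h : ∑ i, (-b i) * a i = ∑ i, -(a i * b i) := Finset.sum_congr rfl fun i _ => by ring
    rw [h, ← Finset.sum_neg_distrib]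
  have h2 : ∀ (k : ℕ) (a b : Fin k → F), (∑ i, a i * b i) = ∑ i, b i * a i :=
    fun k a b => Finset.sum_congr rfl fun i _ => by ring
  have h0 : -(Bf F v u) = -(∑ i, v.1 i * u.1 i) + -(∑ i, v.2.1 i * u.2.1 i)
      + (∑ i, v.2.2 i * u.2.2 i) := by rw [Bf]; ring
  rw [h0, h1 m v.1 u.1, h1 n v.2.1 u.2.1, h2 m v.2.2 u.2.2]

theorem stmt16 (m n : ℕ)
    (C : Submodule F ((Fin m → F) × (Fin n → F) × (Fin m → F)))
    (e : Fin (Fintype.card F) ≃ F) (y : ℂ)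
    (x z : Fin m → Fin (Fintype.card F) → ℂ) :
    (Nat.card C : ℂ) *
        ∑ v : (Fin m → F) × (Fin n → F) × (Fin m → F),
          (if v ∈ twistedDual F (C : Set ((Fin m → F) × (Fin n → F) × (Fin m → F))) then
            (∏ i, x i (e.symm (v.1 i))) * y ^ wt F v.2.1 *
              ∏ i, z i (e.symm (v.2.2 i))
          else 0)
      = ∑ u : (Fin m → F) × (Fin n → F) × (Fin m → F),
          (if u ∈ C then
            (∏ i, ∑ j, omg p ^ (-((Algebra.trace (ZMod p) F (u.1 i * e j)).val : ℤ)) * x i j) *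
              (1 + ((Fintype.card F : ℂ) - 1) * y) ^ (n - wt F u.2.1) *
              (1 - y) ^ wt F u.2.1 *
              ∏ i, ∑ j, omg p ^ (((Algebra.trace (ZMod p) F (u.2.2 i * e j)).val : ℤ)) * z i j
          else 0) := by
  have key : ∀ u : (Fin m → F) × (Fin n → F) × (Fin m → F),
      (∏ i, ∑ j, omg p ^ (-((Algebra.trace (ZMod p) F (u.1 i * e j)).val : ℤ)) * x i j) *
        (1 + ((Fintype.card F : ℂ) - 1) * y) ^ (n - wt F u.2.1) *
        (1 - y) ^ wt F u.2.1 *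
        ∏ i, ∑ j, omg p ^ (((Algebra.trace (ZMod p) F (u.2.2 i * e j)).val : ℤ)) * z i j
      = ∑ v : (Fin m → F) × (Fin n → F) × (Fin m → F),
          chi p F (-(Bf F v u)) *
            ((∏ i, x i (e.symm (v.1 i))) * y ^ wt F v.2.1 * ∏ i, z i (e.symm (v.2.2 i))) := by
    intro u
    have hx : ∀ (i : Fin m) (j : Fin (Fintype.card F)),
        omg p ^ (-((Algebra.trace (ZMod p) F (u.1 i * e j)).val : ℤ)) * x i j
        = chi p F ((-u.1 i) * e j) * x i j := by
      intro i j; rw [neg_mul, chi_neg]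
    have hz : ∀ (i : Fin m) (j : Fin (Fintype.card F)),
        omg p ^ (((Algebra.trace (ZMod p) F (u.2.2 i * e j)).val : ℤ)) * z i j
        = chi p F (u.2.2 i * e j) * z i j := fun i j => rfl
    simp only [hx, hz]
    have hX := expandProd p F (fun i => -u.1 i) e x
    have hZ := expandProd p F (fun i => u.2.2 i) e z
    have hM := expandMid p F u.2.1 y
    calc (∏ i, ∑ j, chi p F ((-u.1 i) * e j) * x i j) *
          (1 + ((Fintype.card F : ℂ) - 1) * y) ^ (n - wt F u.2.1) *
          (1 - y) ^ wt F u.2.1 *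
          ∏ i, ∑ j, chi p F (u.2.2 i * e j) * z i j
        = (∑ w : Fin m → F, (∏ i, chi p F ((-u.1 i) * w i)) * ∏ i, x i (e.symm (w i))) *
            (∑ pv : Fin n → F, (∏ i, chi p F ((-u.2.1 i) * pv i)) * y ^ wt F pv) *
            ∑ w' : Fin m → F, (∏ i, chi p F (u.2.2 i * w' i)) * ∏ i, z i (e.symm (w' i)) := by
          rw [← hX, ← hZ, ← hM]; ring
      _ = ∑ v : (Fin m → F) × (Fin n → F) × (Fin m → F),
          chi p F (-(Bf F v u)) *
            ((∏ i, x i (e.symm (v.1 i))) * y ^ wt F v.2.1 * ∏ i, z i (e.symm (v.2.2 i))) := by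
          rw [Finset.sum_mul_sum, Finset.sum_mul, Fintype.sum_prod_type]
          refine Finset.sum_congr rfl fun w _ => ?_
          rw [Finset.sum_mul, Fintype.sum_prod_type]
          refine Finset.sum_congr rfl fun pv _ => ?_
          rw [Finset.mul_sum]
          refine Finset.sum_congr rfl fun w' _ => ?_
          rw [chi_neg_Bf]
          dsimp only
          ring
  symm
  calc ∑ u : (Fin m → F) × (Fin n → F) × (Fin m → F),
          (if u ∈ C then
            (∏ i, ∑ j, omg p ^ (-((Algebra.trace (ZMod p) F (u.1 i * e j)).val : ℤ)) * x i j) *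
              (1 + ((Fintype.card F : ℂ) - 1) * y) ^ (n - wt F u.2.1) *
              (1 - y) ^ wt F u.2.1 *
              ∏ i, ∑ j, omg p ^ (((Algebra.trace (ZMod p) F (u.2.2 i * e j)).val : ℤ)) * z i j
          else 0)
      = ∑ u : (Fin m → F) × (Fin n → F) × (Fin m → F),
          ∑ v : (Fin m → F) × (Fin n → F) × (Fin m → F),
            (if u ∈ C then chi p F (-(Bf F v u)) else 0) *
              ((∏ i, x i (e.symm (v.1 i))) * y ^ wt F v.2.1 * ∏ i, z i (e.symm (v.2.2 i))) := by
        refine Finset.sum_congr rfl fun u _ => ?_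
        by_cases hu : u ∈ C
        · simp only [hu, if_true]
          exact key u
        · simp [hu]
    _ = ∑ v : (Fin m → F) × (Fin n → F) × (Fin m → F),
          ∑ u : (Fin m → F) × (Fin n → F) × (Fin m → F),
            (if u ∈ C then chi p F (-(Bf F v u)) else 0) *
              ((∏ i, x i (e.symm (v.1 i))) * y ^ wt F v.2.1 * ∏ i, z i (e.symm (v.2.2 i))) :=
        Finset.sum_comm
    _ = ∑ v : (Fin m → F) × (Fin n → F) × (Fin m → F),
          ((Nat.card C : ℂ) *
            (if v ∈ twistedDual F (C : Set ((Fin m → F) × (Fin n → F) × (Fin m → F))) then 1 else 0)) *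
              ((∏ i, x i (e.symm (v.1 i))) * y ^ wt F v.2.1 * ∏ i, z i (e.symm (v.2.2 i))) := by
        refine Finset.sum_congr rfl fun v _ => ?_
        rw [← Finset.sum_mul, orth p F C v]
    _ = (Nat.card C : ℂ) *
        ∑ v : (Fin m → F) × (Fin n → F) × (Fin m → F),
          (if v ∈ twistedDual F (C : Set ((Fin m → F) × (Fin n → F) × (Fin m → F))) then
            (∏ i, x i (e.symm (v.1 i))) * y ^ wt F v.2.1 *
              ∏ i, z i (e.symm (v.2.2 i))
          else 0) := by
        rw [Finset.mul_sum]
        refine Finset.sum_congr rfl fun v _ => ?_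
        by_cases hv : v ∈ twistedDual F (C : Set ((Fin m → F) × (Fin n → F) × (Fin m → F)))
        · simp [hv]
        · simp [hv]
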